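/- Let F be a deterministic single-outputting p-filter in which every state is reachable from the initial state. Then the minimum cardinality of a clique cover of the compatibility graph G(F) that covers all vertices and satisfies Zip(F) equals the minimum number of states of a deterministic p-filter that output simulates F. -/
import Mathlib


/-- A procrustean filter (p-filter): states `V`, a nonempty set of initial
states, observations `Y`, a transition function `tr : V → V → Set Y`,
an output space `C`, and an output function `out : V → Set C` mapping each
state to a nonempty set of outputs. -/
structure PFilter (V Y C : Type) where
  init : Set V
  init_nonempty : init.Nonempty
  tr : V → V → Set Y
  out : V → Set C
  out_nonempty : ∀ v, (out v).Nonempty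

namespace PFilter

variable {V V' Y C : Type}

/-- `F.Reaches v s u` : the observation string `s` reaches state `u` from `v`. -/
inductive Reaches (F : PFilter V Y C) : V → List Y → V → Prop
  | nil (v : V) : Reaches F v [] v
  | cons {v w u : V} {y : Y} {s : List Y} :
      y ∈ F.tr v w → Reaches F w s u → Reaches F v (y :: s) u

/-- The set of states reached by `s` when traced from state `v`. -/
def reachedFrom (F : PFilter V Y C) (v : V) (s : List Y) : Set V :=
  {u | F.Reaches v s u}

/-- The set of states reached by `s` from some initial state. -/
def reached (F : PFilter V Y C) (s : List Y) : Set V :=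
  {u | ∃ v0 ∈ F.init, F.Reaches v0 s u}

/-- The extensions of a state `v`: strings that do not crash from `v`. -/
def extensions (F : PFilter V Y C) (v : V) : Set (List Y) :=
  {s | ∃ u, F.Reaches v s u}

/-- The interaction language of `F`: extensions of initial states. -/
def language (F : PFilter V Y C) : Set (List Y) :=
  {s | ∃ v0 ∈ F.init, ∃ u, F.Reaches v0 s u}

/-- The filter output for string `s`: union of outputs of states reached by `s`. -/
def outputs (F : PFilter V Y C) (s : List Y) : Set C :=
  ⋃ v ∈ F.reached s, F.out v

/-- `F'` output simulates `F`. -/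
def OutputSimulates (F' : PFilter V' Y C) (F : PFilter V Y C) : Prop :=
  ∀ s ∈ F.language, (F'.outputs s).Nonempty ∧ F'.outputs s ⊆ F.outputs s

/-- `F` is deterministic: one initial state, and outgoing transition labels
from any state are pairwise disjoint. -/
def Deterministic (F : PFilter V Y C) : Prop :=
  (∃ v0, F.init = {v0}) ∧
    ∀ v1 v2 v3 : V, v2 ≠ v3 → F.tr v1 v2 ∩ F.tr v1 v3 = ∅

/-- `F` is single-outputting: every state's output set is a singleton. -/
def SingleOutputting (F : PFilter V Y C) : Prop :=
  ∀ v, ∃ o, F.out v = {o}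

/-- Two states are compatible: they agree on the outputs of all common extensions. -/
def Compatible (F : PFilter V Y C) (v w : V) : Prop :=
  ∀ s ∈ F.extensions v ∩ F.extensions w,
    ∀ v' ∈ F.reachedFrom v s, ∀ w' ∈ F.reachedFrom w s, F.out v' = F.out w'

/-- A set of mutually compatible states (a clique in the compatibility graph). -/
def MutuallyCompatible (F : PFilter V Y C) (U : Set V) : Prop :=
  ∀ v ∈ U, ∀ w ∈ U, F.Compatible v w

/-- A set of states is group compatible: there is a common output on
all their extensions. -/
def GroupCompatible (F : PFilter V Y C) (U : Set V) : Prop :=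
  ∀ s : List Y, (∃ u ∈ U, s ∈ F.extensions u) →
    (⋂ w ∈ {w | ∃ u ∈ U, w ∈ F.reachedFrom u s}, F.out w).Nonempty

/-- A state `v` of `F` corresponds to a state `v'` of `F'` if some string
reaches both from the respective initial states. -/
def Corresponds (F : PFilter V Y C) (F' : PFilter V' Y C) (v : V) (v' : V') : Prop :=
  ∃ s : List Y, v ∈ F.reached s ∧ v' ∈ F'.reached s

/-- `K_{v'}` : the set of states of `F` corresponding to a state `v'` of `F'`. -/
def corrSet (F : PFilter V Y C) (F' : PFilter V' Y C) (v' : V') : Set V :=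
  {v | Corresponds F F' v v'}

/-- The induced cover `Q(F,F') = {K_{v'} : v' ∈ V(F')}`. -/
def inducedCover (F : PFilter V Y C) (F' : PFilter V' Y C) : Set (Set V) :=
  Set.range (corrSet F F')

/-- The relation induced on `V(F)` by an output-simulating filter `F'`. -/
def inducedRel (F : PFilter V Y C) (F' : PFilter V' Y C) (v w : V) : Prop :=
  ∃ v' : V', Corresponds F F' v v' ∧ Corresponds F F' w v'

/-- `(U,W)_y` is a zipper constraint: `U` and `W` are sets of mutually
compatible states and `W` is the set of `y`-successors of `U`. -/
def ZipperConstraint (F : PFilter V Y C) (U W : Set V) (y : Y) : Prop :=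
  F.MutuallyCompatible U ∧ F.MutuallyCompatible W ∧
    W = {w | ∃ u ∈ U, y ∈ F.tr u w}

/-- A collection of sets `K` satisfies the zipper constraints of `F`. -/
def SatisfiesZip (F : PFilter V Y C) (K : Set (Set V)) : Prop :=
  ∀ U W y, F.ZipperConstraint U W y → (∃ S ∈ K, U ⊆ S) → ∃ T ∈ K, W ⊆ T

/-- `K` is a clique cover of the compatibility graph of `F` covering all vertices. -/
def IsCliqueCover (F : PFilter V Y C) (K : Set (Set V)) : Prop :=
  (∀ S ∈ K, F.MutuallyCompatible S) ∧ ⋃₀ K = Set.univ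

/-- `(U,W)_y` is a generalized zipper constraint: `U` and `W` are group
compatible and `W` is the set of `y`-successors of `U`. -/
def GenZipperConstraint (F : PFilter V Y C) (U W : Set V) (y : Y) : Prop :=
  F.GroupCompatible U ∧ F.GroupCompatible W ∧
    W = {w | ∃ u ∈ U, y ∈ F.tr u w}

/-- A collection of sets `K` satisfies the generalized zipper constraints of `F`. -/
def SatisfiesGenZip (F : PFilter V Y C) (K : Set (Set V)) : Prop :=
  ∀ U W y, F.GenZipperConstraint U W y → (∃ S ∈ K, U ⊆ S) → ∃ T ∈ K, W ⊆ T

/-- `K` is a cover of `V(F)` by group-compatible sets. -/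
def IsGroupCover (F : PFilter V Y C) (K : Set (Set V)) : Prop :=
  (∀ S ∈ K, F.GroupCompatible S) ∧ ⋃₀ K = Set.univ

/-- `F'` is an induced filter `M(F,K)`: one state per set of `K`; a state is
initial iff its set contains an initial state; output is the intersection of
the outputs over its set; transitions are inherited, and for each state and
observation only a single edge is kept, going to a set that contains all
successors under that observation. -/
def IsInducedFilter (F : PFilter V Y C) (K : Set (Set V))
    (F' : PFilter {S // S ∈ K} Y C) : Prop :=
  F'.init = {S : {S // S ∈ K} | ∃ v ∈ F.init, v ∈ S.1} ∧
  (∀ S, F'.out S = ⋂ v ∈ S.1, F.out v) ∧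
  (∀ S T (y : Y), y ∈ F'.tr S T → ∃ v ∈ S.1, ∃ w ∈ T.1, y ∈ F.tr v w) ∧
  (∀ S T (y : Y), y ∈ F'.tr S T → ∀ w, (∃ v ∈ S.1, y ∈ F.tr v w) → w ∈ T.1) ∧
  (∀ S (y : Y), (∃ v ∈ S.1, ∃ w, y ∈ F.tr v w) → ∃! T, y ∈ F'.tr S T)

/-- `F'` is the merged filter of `F` under cover `K` *without* the pruning
step: initial states are sets containing an initial state, outputs are the
common outputs of each set, and transitions are fully inherited. -/
def IsMergedFilter (F : PFilter V Y C) (K : Set (Set V))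
    (F' : PFilter {S // S ∈ K} Y C) : Prop :=
  F'.init = {S : {S // S ∈ K} | ∃ v ∈ F.init, v ∈ S.1} ∧
  (∀ S, F'.out S = ⋂ v ∈ S.1, F.out v) ∧
  (∀ S T, F'.tr S T = ⋃ v ∈ S.1, ⋃ w ∈ T.1, F.tr v w)

end PFilter


namespace PFilter

variable {V V' Y C : Type}

lemma Reaches.append' {F : PFilter V Y C} {v m u : V} {p s : List Y}
    (h1 : F.Reaches v p m) (h2 : F.Reaches m s u) : F.Reaches v (p ++ s) u := by
  induction h1 with
  | nil => simpa using h2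
  | cons hy _ ih => exact .cons hy (ih h2)

lemma reaches_nil' {F : PFilter V Y C} {v u : V} (h : F.Reaches v [] u) : u = v := by
  cases h; rfl

lemma reaches_cons' {F : PFilter V Y C} {v u : V} {y : Y} {s : List Y}
    (h : F.Reaches v (y :: s) u) : ∃ w, y ∈ F.tr v w ∧ F.Reaches w s u := by
  cases h with | cons hy h' => exact ⟨_, hy, h'⟩

lemma reaches_append_iff' {F : PFilter V Y C} {v u : V} {p s : List Y} :
    F.Reaches v (p ++ s) u ↔ ∃ m, F.Reaches v p m ∧ F.Reaches m s u := by
  constructor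
  · intro h
    induction p generalizing v with
    | nil => exact ⟨v, .nil v, h⟩
    | cons y p ih =>
      obtain ⟨w, hy, h'⟩ := reaches_cons' h
      obtain ⟨m, h1, h2⟩ := ih h'
      exact ⟨m, .cons hy h1, h2⟩
  · rintro ⟨m, h1, h2⟩; exact h1.append' h2

lemma det_reaches_unique {F : PFilter V Y C} (hdet : F.Deterministic)
    {v u1 u2 : V} {s : List Y} (h1 : F.Reaches v s u1) (h2 : F.Reaches v s u2) :
    u1 = u2 := by
  induction s generalizing v with
  | nil => rw [reaches_nil' h1, reaches_nil' h2]
  | cons y s ih =>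
    obtain ⟨w1, hy1, h1'⟩ := reaches_cons' h1
    obtain ⟨w2, hy2, h2'⟩ := reaches_cons' h2
    have hw : w1 = w2 := by
      by_contra hne
      have hd := hdet.2 v w1 w2 hne
      have : y ∈ F.tr v w1 ∩ F.tr v w2 := ⟨hy1, hy2⟩
      rw [hd] at this
      exact this
    subst hw
    exact ih h1' h2'

lemma det_reached_unique {F : PFilter V Y C} (hdet : F.Deterministic)
    {s : List Y} {u1 u2 : V} (h1 : u1 ∈ F.reached s) (h2 : u2 ∈ F.reached s) :
    u1 = u2 := by
  obtain ⟨x0, hx0⟩ := hdet.1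
  obtain ⟨a, ha, h1⟩ := h1
  obtain ⟨b, hb, h2⟩ := h2
  rw [hx0, Set.mem_singleton_iff] at ha hb
  subst ha; subst hb
  exact det_reaches_unique hdet h1 h2

lemma clique_out_eq {F : PFilter V Y C} {S : Set V} (hS : F.MutuallyCompatible S)
    {v w : V} (hv : v ∈ S) (hw : w ∈ S) : F.out v = F.out w :=
  hS v hv w hw [] ⟨⟨v, .nil v⟩, ⟨w, .nil w⟩⟩ v (.nil v) w (.nil w)

/-- Direction A: induced cover of a deterministic output-simulating filter. -/
lemma dirA [Finite V] {V' : Type} [Finite V'] (F : PFilter V Y C)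
    (hdet : F.Deterministic) (hso : F.SingleOutputting)
    (hreach : ∀ v : V, ∃ s : List Y, v ∈ F.reached s)
    (F' : PFilter V' Y C) (hdet' : F'.Deterministic) (hsim : F'.OutputSimulates F) :
    IsCliqueCover F (inducedCover F F') ∧ SatisfiesZip F (inducedCover F F') ∧
      (inducedCover F F').ncard ≤ Nat.card V' := by
  -- key: common correspondence implies compatibility
  have key : ∀ (r : List Y) (x x1 : V) (v' : V'), x ∈ F.reached r → v' ∈ F'.reached r →
      ∀ s : List Y, F.Reaches x s x1 →
      (F'.outputs (r ++ s)).Nonempty ∧ F'.outputs (r ++ s) ⊆ F.out x1 ∧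
        F'.reached (r ++ s) = F'.reachedFrom v' s := by
    intro r x x1 v' hx hv' s hxs
    obtain ⟨a, ha, har⟩ := hx
    have hlang : (r ++ s) ∈ F.language := ⟨a, ha, x1, har.append' hxs⟩
    obtain ⟨hne, hsub⟩ := hsim _ hlang
    have hx1 : x1 ∈ F.reached (r ++ s) := ⟨a, ha, har.append' hxs⟩
    refine ⟨hne, ?_, ?_⟩
    · intro c hc
      have hc' := hsub hc
      simp only [outputs, Set.mem_iUnion] at hc'
      obtain ⟨u, hu, hcu⟩ := hc'
      rwa [det_reached_unique hdet hu hx1] at hcu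
    · ext u'
      constructor
      · rintro ⟨b0, hb0, hb⟩
        obtain ⟨m, hm1, hm2⟩ := reaches_append_iff'.1 hb
        rwa [det_reached_unique hdet' (⟨b0, hb0, hm1⟩ : m ∈ F'.reached r) hv'] at hm2
      · intro hu'
        obtain ⟨b0, hb0, hb⟩ := hv'
        exact ⟨b0, hb0, hb.append' hu'⟩
  have hcompat : ∀ (v w : V) (v' : V'), Corresponds F F' v v' → Corresponds F F' w v' →
      F.Compatible v w := by
    intro v w v' hv hw s hs v1 hv1 w1 hw1
    obtain ⟨p, hvp, hv'p⟩ := hv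
    obtain ⟨q, hwq, hv'q⟩ := hw
    obtain ⟨hne1, hsub1, hre1⟩ := key p v v1 v' hvp hv'p s hv1
    obtain ⟨_, hsub2, hre2⟩ := key q w w1 v' hwq hv'q s hw1
    have houteq : F'.outputs (p ++ s) = F'.outputs (q ++ s) := by
      unfold outputs
      rw [hre1, hre2]
    obtain ⟨c, hc⟩ := hne1
    have h1 : c ∈ F.out v1 := hsub1 hc
    have h2 : c ∈ F.out w1 := hsub2 (houteq ▸ hc)
    obtain ⟨o1, ho1⟩ := hso v1
    obtain ⟨o2, ho2⟩ := hso w1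
    rw [ho1] at h1
    rw [ho2] at h2
    rw [ho1, ho2,
      (Set.mem_singleton_iff.1 h1).symm.trans (Set.mem_singleton_iff.1 h2)]
  refine ⟨⟨?_, ?_⟩, ?_, ?_⟩
  · rintro S ⟨v', rfl⟩ v hv w hw
    exact hcompat v w v' hv hw
  · ext v
    simp only [Set.mem_univ, iff_true, Set.mem_sUnion]
    obtain ⟨s, hv⟩ := hreach v
    have hlang : s ∈ F.language := by
      obtain ⟨a, ha, h⟩ := hv; exact ⟨a, ha, v, h⟩
    obtain ⟨c, hc⟩ := (hsim _ hlang).1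
    simp only [outputs, Set.mem_iUnion] at hc
    obtain ⟨v', hv', _⟩ := hc
    exact ⟨corrSet F F' v', ⟨v', rfl⟩, s, hv, hv'⟩
  · rintro U W y ⟨hU, hW, rfl⟩ ⟨S, ⟨v', rfl⟩, hUS⟩
    by_cases hWne : {w | ∃ u ∈ U, y ∈ F.tr u w}.Nonempty
    · obtain ⟨wb, ub, hub, hyb⟩ := hWne
      obtain ⟨sb, hub', hv'b⟩ := hUS hub
      have hlang : (sb ++ [y]) ∈ F.language := by
        obtain ⟨a, ha, h⟩ := hub'
        exact ⟨a, ha, wb, h.append' (.cons hyb (.nil wb))⟩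
      obtain ⟨c, hc⟩ := (hsim _ hlang).1
      simp only [outputs, Set.mem_iUnion] at hc
      obtain ⟨w', hw', _⟩ := hc
      obtain ⟨b0, hb0, hb⟩ := hw'
      obtain ⟨m, hm1, hm2⟩ := reaches_append_iff'.1 hb
      have hm : m = v' := det_reached_unique hdet' (⟨b0, hb0, hm1⟩ : m ∈ F'.reached sb) hv'b
      subst hm
      obtain ⟨w'', hy'', h''⟩ := reaches_cons' hm2
      have hw'' : w' = w'' := reaches_nil' h''
      subst hw''
      refine ⟨corrSet F F' w', ⟨w', rfl⟩, ?_⟩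
      rintro w2 ⟨u2, hu2, hy2⟩
      obtain ⟨s2, hu2', hv'2⟩ := hUS hu2
      obtain ⟨a, ha, h⟩ := hu2'
      obtain ⟨b1, hb1, h'⟩ := hv'2
      exact ⟨s2 ++ [y], ⟨a, ha, h.append' (.cons hy2 (.nil w2))⟩,
        ⟨b1, hb1, h'.append' (.cons hy'' (.nil w'))⟩⟩
    · rw [Set.not_nonempty_iff_eq_empty] at hWne
      rw [hWne]
      exact ⟨corrSet F F' v', ⟨v', rfl⟩, Set.empty_subset _⟩
  · calc (inducedCover F F').ncard = (corrSet F F' '' Set.univ).ncard := by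
          rw [Set.image_univ]; rfl
      _ ≤ (Set.univ : Set V').ncard := Set.ncard_image_le Set.finite_univ
      _ = Nat.card V' := Set.ncard_univ V'

/-- Direction B: from a zipper-satisfying clique cover, build a deterministic
output-simulating filter with one state per clique. -/
lemma dirB (F : PFilter V Y C) (hdet : F.Deterministic)
    {K : Set (Set V)} (hK : IsCliqueCover F K) (hzip : SatisfiesZip F K) :
    ∃ F' : PFilter {S // S ∈ K} Y C, F'.Deterministic ∧ F'.OutputSimulates F := by
  classical
  obtain ⟨v0, hv0⟩ := hdet.1
  have hv0V : v0 ∈ ⋃₀ K := by rw [hK.2]; exact Set.mem_univ v0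
  obtain ⟨S0, hS0K, hv0S0⟩ := hv0V
  have hVne : Nonempty V := ⟨v0⟩
  have hsucc : ∀ (S : {S // S ∈ K}) (y : Y), ∃ T ∈ K, {w | ∃ u ∈ S.1, y ∈ F.tr u w} ⊆ T := by
    intro S y
    refine hzip S.1 _ y ⟨hK.1 S.1 S.2, ?_, rfl⟩ ⟨S.1, S.2, subset_rfl⟩
    rintro w1 ⟨u1, hu1, hy1⟩ w2 ⟨u2, hu2, hy2⟩ s hs x1 hx1 x2 hx2
    exact hK.1 S.1 S.2 u1 hu1 u2 hu2 (y :: s)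
      ⟨⟨x1, .cons hy1 hx1⟩, ⟨x2, .cons hy2 hx2⟩⟩ x1 (.cons hy1 hx1) x2 (.cons hy2 hx2)
  choose next hnextK hnextsub using hsucc
  let elt : {S // S ∈ K} → V := fun S => if h : S.1.Nonempty then h.choose else Classical.arbitrary V
  have helt : ∀ S : {S // S ∈ K}, S.1.Nonempty → elt S ∈ S.1 := by
    intro S h
    simp only [elt, dif_pos h]
    exact h.choose_spec
  refine ⟨{ init := {⟨S0, hS0K⟩},
            init_nonempty := ⟨⟨S0, hS0K⟩, rfl⟩,
            tr := fun S T => {y | (∃ v ∈ S.1, ∃ w, y ∈ F.tr v w) ∧ T = ⟨next S y, hnextK S y⟩},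
            out := fun S => F.out (elt S),
            out_nonempty := fun S => F.out_nonempty _ }, ?_, ?_⟩
  case _ =>
    refine ⟨⟨⟨S0, hS0K⟩, rfl⟩, ?_⟩
    intro S T T' hne
    ext y
    simp only [Set.mem_inter_iff, Set.mem_empty_iff_false, iff_false]
    rintro ⟨⟨_, hT⟩, _, hT'⟩
    exact hne (hT.trans hT'.symm)
  case _ =>
    set F' : PFilter {S // S ∈ K} Y C :=
      { init := {⟨S0, hS0K⟩},
        init_nonempty := ⟨⟨S0, hS0K⟩, rfl⟩,
        tr := fun S T => {y | (∃ v ∈ S.1, ∃ w, y ∈ F.tr v w) ∧ T = ⟨next S y, hnextK S y⟩},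
        out := fun S => F.out (elt S),
        out_nonempty := fun S => F.out_nonempty _ } with hF'
    have hdet' : F'.Deterministic := by
      refine ⟨⟨⟨S0, hS0K⟩, rfl⟩, ?_⟩
      intro S T T' hne
      ext y
      simp only [hF', Set.mem_inter_iff, Set.mem_empty_iff_false, iff_false]
      rintro ⟨⟨_, hT⟩, _, hT'⟩
      exact hne (hT.trans hT'.symm)
    have hout : ∀ (S : {S // S ∈ K}) (u : V), u ∈ S.1 → F'.out S = F.out u := by
      intro S u hu
      show F.out (elt S) = F.out u
      exact clique_out_eq (hK.1 S.1 S.2) (helt S ⟨u, hu⟩) hu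
    have hsiml : ∀ {v : V} {s : List Y} {u : V}, F.Reaches v s u →
        ∀ S : {S // S ∈ K}, v ∈ S.1 → ∃ T, F'.Reaches S s T ∧ u ∈ T.1 := by
      intro v s u h
      induction h with
      | nil v => exact fun S hv => ⟨S, .nil S, hv⟩
      | @cons v w u y s hy h ih =>
        intro S hv
        have hyT : y ∈ F'.tr S ⟨next S y, hnextK S y⟩ := ⟨⟨v, hv, w, hy⟩, rfl⟩
        have hw : w ∈ next S y := hnextsub S y ⟨v, hv, hy⟩
        obtain ⟨T, hT, hu⟩ := ih ⟨next S y, hnextK S y⟩ hw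
        exact ⟨T, .cons hyT hT, hu⟩
    intro s hs
    obtain ⟨a, ha, u, hu⟩ := hs
    rw [hv0, Set.mem_singleton_iff] at ha
    rw [ha] at hu
    obtain ⟨T, hT, huT⟩ := hsiml hu ⟨S0, hS0K⟩ hv0S0
    have hTr : T ∈ F'.reached s := ⟨⟨S0, hS0K⟩, rfl, hT⟩
    constructor
    · obtain ⟨c, hc⟩ := F'.out_nonempty T
      exact ⟨c, Set.mem_biUnion hTr hc⟩
    · intro c hc
      simp only [outputs, Set.mem_iUnion] at hc
      obtain ⟨T', hT', hc⟩ := hc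
      rw [det_reached_unique hdet' hT' hTr] at hc
      rw [hout T u huT] at hc
      have hur : u ∈ F.reached s := ⟨v0, by rw [hv0]; rfl, hu⟩
      exact Set.mem_biUnion hur hc

end PFilter

/-- The minimum cardinality of a zipper-satisfying clique cover
equals the minimum number of states of a deterministic output-simulating
filter. -/
theorem min_cover_card_eq_min_filter_card {V Y C : Type} [Finite V]
    (F : PFilter V Y C) (hdet : F.Deterministic) (hso : F.SingleOutputting)
    (hreach : ∀ v : V, ∃ s : List Y, v ∈ F.reached s) :
    sInf {n : ℕ | ∃ K : Set (Set V),
        PFilter.IsCliqueCover F K ∧ PFilter.SatisfiesZip F K ∧ K.ncard = n} =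
    sInf {n : ℕ | ∃ (V' : Type) (_ : Finite V') (F' : PFilter V' Y C),
        F'.Deterministic ∧ F'.OutputSimulates F ∧ Nat.card V' = n} := by
  classical
  have hBne : {n : ℕ | ∃ (V' : Type) (_ : Finite V') (F' : PFilter V' Y C),
      F'.Deterministic ∧ F'.OutputSimulates F ∧ Nat.card V' = n}.Nonempty := by
    refine ⟨Nat.card V, V, inferInstance, F, hdet, ?_, rfl⟩
    intro s hs
    obtain ⟨a, ha, u, hu⟩ := hs
    refine ⟨?_, subset_rfl⟩
    obtain ⟨c, hc⟩ := F.out_nonempty u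
    exact ⟨c, Set.mem_biUnion (⟨a, ha, hu⟩ : u ∈ F.reached s) hc⟩
  have hAne : {n : ℕ | ∃ K : Set (Set V),
      PFilter.IsCliqueCover F K ∧ PFilter.SatisfiesZip F K ∧ K.ncard = n}.Nonempty := by
    obtain ⟨h1, h2, _⟩ := PFilter.dirA F hdet hso hreach F hdet (by
      intro s hs
      obtain ⟨a, ha, u, hu⟩ := hs
      refine ⟨?_, subset_rfl⟩
      obtain ⟨c, hc⟩ := F.out_nonempty u
      exact ⟨c, Set.mem_biUnion (⟨a, ha, hu⟩ : u ∈ F.reached s) hc⟩)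
    exact ⟨_, _, h1, h2, rfl⟩
  apply le_antisymm
  · obtain ⟨V', hfin, F', hd', hs', hcard⟩ := Nat.sInf_mem hBne
    haveI := hfin
    obtain ⟨h1, h2, h3⟩ := PFilter.dirA F hdet hso hreach F' hd' hs'
    exact le_trans (Nat.sInf_le ⟨_, h1, h2, rfl⟩) (hcard ▸ h3)
  · obtain ⟨K, hK, hzip, hcard⟩ := Nat.sInf_mem hAne
    obtain ⟨F', hd', hs'⟩ := PFilter.dirB F hdet hK hzip
    exact Nat.sInf_le ⟨{S // S ∈ K}, inferInstance, F', hd', hs',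
      by rw [Nat.card_coe_set_eq, hcard]⟩
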